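/- Let (W,S) be a chordal Coxeter system, let A = {a,b,c} be a maximal irreducible simplex of (W,S), and let d ∈ S − (A ∪ A^⊥) be such that {a,b,d} is a simplex of (W,S). Then {a,b} ∪ A^⊥ is a (c,d)-separator of S. -/

import Mathlib

/-- A simple graph is *chordal* if every cycle of length at least four has a chord,
that is, an edge of the graph joining two vertices of the cycle that is not an
edge of the cycle. -/
def SimpleGraph.IsChordal {V : Type*} (G : SimpleGraph V) : Prop :=
  ∀ ⦃v : V⦄ (w : G.Walk v v), w.IsCycle → 4 ≤ w.length →
    ∃ a b, a ∈ w.support ∧ b ∈ w.support ∧ G.Adj a b ∧ s(a, b) ∉ w.edges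

/-- `B` is a `(c,f)`-separator of `G`: `c, f ∉ B` and `c` and `f` lie in different
connected components of the induced subgraph `G − B`. -/
def SimpleGraph.IsSeparator {V : Type*} (G : SimpleGraph V) (c f : V) (Bs : Set V) : Prop :=
  ∃ (hc : c ∈ Bsᶜ) (hf : f ∈ Bsᶜ), ¬ (G.induce Bsᶜ).Reachable ⟨c, hc⟩ ⟨f, hf⟩

/-- `B` is a minimal `(c,f)`-separator: no proper subset of `B` is a `(c,f)`-separator. -/
def SimpleGraph.IsMinSeparator {V : Type*} (G : SimpleGraph V) (c f : V) (Bs : Set V) : Prop :=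
  G.IsSeparator c f Bs ∧ ∀ Bs' ⊂ Bs, ¬ G.IsSeparator c f Bs'

/-- `u` and `g` lie in the same connected component of `G − B`. -/
def SimpleGraph.InSepComp {V : Type*} (G : SimpleGraph V) (Bs : Set V) (u g : V) : Prop :=
  ∃ (hu : u ∈ Bsᶜ) (hg : g ∈ Bsᶜ), (G.induce Bsᶜ).Reachable ⟨u, hu⟩ ⟨g, hg⟩

namespace CoxeterMatrix

variable {B : Type*}

/-- The underlying graph of the presentation diagram of a Coxeter matrix:
vertices are the indices, and `s, t` are adjacent when `m(s,t) < ∞`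
(`0` encodes `∞`). -/
def pDiagram (M : CoxeterMatrix B) : SimpleGraph B where
  Adj s t := s ≠ t ∧ M s t ≠ 0
  symm := ⟨by intro s t h; exact ⟨h.1.symm, by rw [M.symmetric]; exact h.2⟩⟩
  loopless := ⟨by intro s h; exact h.1 rfl⟩

/-- The underlying graph of the Coxeter diagram induced on a subset `A`:
`s, t ∈ A` are adjacent when `m(s,t) > 2` (including `m(s,t) = ∞`, encoded by `0`). -/
def cDiagramOn (M : CoxeterMatrix B) (A : Set B) : SimpleGraph A where
  Adj s t := (s : B) ≠ (t : B) ∧ M s t ≠ 2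
  symm := ⟨by intro s t h; exact ⟨h.1.symm, by rw [M.symmetric]; exact h.2⟩⟩
  loopless := ⟨by intro s h; exact h.1 rfl⟩

/-- A *simplex*: a subset whose elements pairwise satisfy `m(s,t) < ∞`. -/
def IsSimplex (M : CoxeterMatrix B) (A : Set B) : Prop :=
  A.Pairwise fun s t => M s t ≠ 0

/-- A subset is *irreducible* if its Coxeter diagram is connected. -/
def IsIrreducible (M : CoxeterMatrix B) (A : Set B) : Prop :=
  (M.cDiagramOn A).Connected

def IsIrredSimplex (M : CoxeterMatrix B) (A : Set B) : Prop :=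
  M.IsSimplex A ∧ M.IsIrreducible A

/-- A maximal irreducible simplex. -/
def IsMaxIrredSimplex (M : CoxeterMatrix B) (A : Set B) : Prop :=
  M.IsIrredSimplex A ∧ ∀ A' : Set B, A ⊂ A' → ¬ M.IsIrredSimplex A'

/-- `A^⊥ = {s : m(s,a) = 2 for all a ∈ A}`. -/
def perp (M : CoxeterMatrix B) (A : Set B) : Set B :=
  {s | ∀ a ∈ A, M s a = 2}

/-- Type `G₃` (= `H₃`): labels `3, 5` on a path, other label `2`. -/
def IsTypeG3 (M : CoxeterMatrix B) (A : Set B) : Prop :=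
  ∃ a b c : B, A = {a, b, c} ∧ M a b = 3 ∧ M b c = 5 ∧ M a c = 2

/-- Type `G₄` (= `H₄`): labels `3, 3, 5` on a path, other labels `2`. -/
def IsTypeG4 (M : CoxeterMatrix B) (A : Set B) : Prop :=
  ∃ a b c d : B, A = {a, b, c, d} ∧ M a b = 3 ∧ M b c = 3 ∧ M c d = 5 ∧
    M a c = 2 ∧ M a d = 2 ∧ M b d = 2

/-- A set of *bad edges*: a symmetric set of pairs `{a,b}` with `m(a,b) ≥ 5` such that
every irreducible simplex properly containing `{a,b}` is of type `G₃` or `G₄`. -/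
def IsBadEdgeSet (M : CoxeterMatrix B) (E : B → B → Prop) : Prop :=
  (∀ a b, E a b → E b a) ∧
  (∀ a b, E a b → M a b = 0 ∨ 5 ≤ M a b) ∧
  (∀ a b, E a b → ∀ A : Set B, M.IsIrredSimplex A → ({a, b} : Set B) ⊂ A →
    M.IsTypeG3 A ∨ M.IsTypeG4 A)

/-- A *bad* irreducible simplex: an irreducible simplex containing a bad edge. -/
def IsBadSimplex (M : CoxeterMatrix B) (E : B → B → Prop) (A : Set B) : Prop :=
  M.IsIrredSimplex A ∧ ∃ a ∈ A, ∃ b ∈ A, E a b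

/-- A *bad separator*: a subset `Bs` containing a pair of eyes `a, b` with `m(a,b) = 2`,
with a bad focus `c ∉ Bs` making `{a,b,c}` a bad maximal irreducible simplex,
`Bs ⊆ {a,b} ∪ {a,b,c}^⊥`, and with a good focus `f ∉ Bs` making `Bs` a minimal
`(c,f)`-separator of the presentation diagram. -/
def IsBadSeparator (M : CoxeterMatrix B) (E : B → B → Prop) (Bs : Set B) : Prop :=
  ∃ a b c : B, a ∈ Bs ∧ b ∈ Bs ∧ M a b = 2 ∧ c ∉ Bs ∧
    M.IsMaxIrredSimplex {a, b, c} ∧ M.IsBadSimplex E {a, b, c} ∧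
    Bs ⊆ {a, b} ∪ M.perp {a, b, c} ∧
    ∃ f, f ∉ Bs ∧ M.pDiagram.IsMinSeparator c f Bs

/-- `{x, y}` is a bad 5-edge: `m(x,y) = 5` and every irreducible simplex
properly containing `{x,y}` is of type `G₃` or `G₄`. -/
def IsBad5Edge (M : CoxeterMatrix B) (x y : B) : Prop :=
  x ≠ y ∧ M x y = 5 ∧ ∀ A : Set B, M.IsIrredSimplex A → ({x, y} : Set B) ⊂ A →
    M.IsTypeG3 A ∨ M.IsTypeG4 A

/-- The bad-edge set consisting of the single unordered pair `{x, y}`. -/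
def singleEdge (x y : B) : B → B → Prop :=
  fun u v => (u = x ∧ v = y) ∨ (u = y ∧ v = x)

end CoxeterMatrix

section Helpers

namespace SimpleGraph
namespace Walk
variable {V : Type*} {G : SimpleGraph V}

lemma getVert_one_append' {u v w : V} (p : G.Walk u v) (q : G.Walk v w) (h : 1 ≤ p.length) :
    (p.append q).getVert 1 = p.getVert 1 := by
  rw [getVert_append]
  rcases lt_or_eq_of_le h with h' | h'
  · rw [if_pos h']
  · rw [if_neg (by omega)]
    have h1 : (1 : ℕ) - p.length = 0 := by omega
    rw [h1, getVert_zero]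
    conv_rhs => rw [h']
    exact (getVert_length p).symm

lemma getVert_length_append' {a b c : V} (q : G.Walk a b) (r : G.Walk b c) :
    (q.append r).getVert q.length = b := by
  rw [getVert_append, if_neg (lt_irrefl _), Nat.sub_self, getVert_zero]

lemma getVert_length_takeUntil' [DecidableEq V] {u v w : V} (p : G.Walk v w)
    (h : u ∈ p.support) : p.getVert (p.takeUntil u h).length = u := by
  have := getVert_length_append' (p.takeUntil u h) (p.dropUntil u h)
  rwa [take_spec p h] at this

lemma edge_getVert_mem_edges' {u v : V} (p : G.Walk u v) {i : ℕ} (hi : i < p.length) :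
    s(p.getVert i, p.getVert (i + 1)) ∈ p.edges := by
  induction p generalizing i with
  | nil => simp at hi
  | cons h q ih =>
    cases i with
    | zero => simp [getVert_zero, getVert_cons_succ, edges_cons]
    | succ n =>
      rw [getVert_cons_succ, getVert_cons_succ]
      exact List.mem_cons_of_mem _ (ih (by simpa using hi))

lemma no_chord' [DecidableEq V] {Bs : Set V} {c e : V}
    (p : G.Walk c e)
    (hmin : ∀ q : G.Walk c e, (∀ v ∈ q.support, v ∉ Bs) → p.length ≤ q.length)
    (hav : ∀ v ∈ p.support, v ∉ Bs)
    {u v : V} (hu : u ∈ p.support) (hv : v ∈ p.support) (huv : G.Adj u v) :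
    s(u, v) ∈ p.edges := by
  by_contra hne
  have hgu : p.getVert (p.takeUntil u hu).length = u := getVert_length_takeUntil' p hu
  have hgv : p.getVert (p.takeUntil v hv).length = v := getVert_length_takeUntil' p hv
  have hiu : (p.takeUntil u hu).length + (p.dropUntil u hu).length = p.length := by
    rw [← length_append, take_spec]
  have hjv : (p.takeUntil v hv).length + (p.dropUntil v hv).length = p.length := by
    rw [← length_append, take_spec]
  set i := (p.takeUntil u hu).length with hidef
  set j := (p.takeUntil v hv).length with hjdef
  have htri : i + 2 ≤ j ∨ j + 2 ≤ i ∨ j = i + 1 ∨ i = j + 1 ∨ i = j := by omega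
  rcases htri with h' | h' | h' | h' | h'
  · -- shortcut c →(takeUntil u) u →(chord) v →(dropUntil v) e
    have := hmin ((p.takeUntil u hu).append (Walk.cons huv (p.dropUntil v hv))) ?_
    · rw [length_append, length_cons] at this; omega
    · intro x hx
      rcases (mem_support_append_iff _ _).mp hx with h | h
      · exact hav x (support_takeUntil_subset p hu h)
      · rw [support_cons, List.mem_cons] at h
        rcases h with h | h
        · exact hav x (h ▸ hu)
        · exact hav x (support_dropUntil_subset p hv h)
  · have := hmin ((p.takeUntil v hv).append (Walk.cons huv.symm (p.dropUntil u hu))) ?_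
    · rw [length_append, length_cons] at this; omega
    · intro x hx
      rcases (mem_support_append_iff _ _).mp hx with h | h
      · exact hav x (support_takeUntil_subset p hv h)
      · rw [support_cons, List.mem_cons] at h
        rcases h with h | h
        · exact hav x (h ▸ hv)
        · exact hav x (support_dropUntil_subset p hu h)
  · refine hne ?_
    rw [← hgu, ← hgv, h']
    exact edge_getVert_mem_edges' p (by omega)
  · refine hne ?_
    rw [Sym2.eq_swap, ← hgu, ← hgv, h']
    exact edge_getVert_mem_edges' p (by omega)
  · exact huv.ne (by rw [← hgu, ← hgv, h'])


lemma chordal_key' [DecidableEq V] (hch : G.IsChordal) (Bs : Set V) :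
    ∀ n : ℕ, ∀ c e α : V, ∀ p : G.Walk c e, p.length = n → 1 ≤ n → p.IsPath →
      (∀ v ∈ p.support, v ∉ Bs) → α ∈ Bs → G.Adj α c → G.Adj e α →
      (∀ q : G.Walk c e, (∀ v ∈ q.support, v ∉ Bs) → n ≤ q.length) →
      G.Adj α (p.getVert 1) := by
  intro n
  induction n using Nat.strong_induction_on with
  | _ n ih =>
  intro c e α p hlen h1 hpath hav hαB hαc heα hmin
  rcases eq_or_lt_of_le h1 with h1' | h2
  · have hgv : p.getVert 1 = e := getVert_of_length_le p (by omega)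
    rw [hgv]; exact heα.symm
  · -- n ≥ 2
    have hce : c ≠ e := by
      intro h; subst h
      have hpn : p = Walk.nil := congrArg Subtype.val (SimpleGraph.Path.loop_eq ⟨p, hpath⟩)
      rw [hpn] at hlen; simp at hlen; omega
    have hαsup : α ∉ p.support := fun h => hav α h hαB
    have heB : e ∉ Bs := hav e p.end_mem_support
    have hαe : α ≠ e := fun h => heB (h ▸ hαB)
    have hαc' : α ≠ c := hαc.ne
    set w : G.Walk c c := p.append (Walk.cons heα (Walk.cons hαc Walk.nil)) with hw
    have hwsupp : w.support = p.support ++ [α, c] := by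
      rw [hw, support_append]; rfl
    have hwedges : w.edges = p.edges ++ [s(e, α), s(α, c)] := by
      rw [hw, edges_append]; rfl
    have hwlen : w.length = n + 2 := by
      rw [hw, length_append, length_cons, length_cons, length_nil, hlen]
    have he1 : s(e, α) ∉ p.edges := fun h => hαsup (p.snd_mem_support_of_mem_edges h)
    have he2 : s(α, c) ∉ p.edges := fun h => hαsup (p.fst_mem_support_of_mem_edges h)
    have he3 : s(e, α) ≠ s(α, c) := by
      intro h
      rw [Sym2.eq_iff] at h
      rcases h with ⟨h1, _⟩ | ⟨h1, _⟩
      · exact hαe h1.symm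
      · exact hce h1.symm
    have hcnt : c ∉ p.support.tail := by
      have := hpath.support_nodup
      rw [p.support_eq_cons] at this
      exact (List.nodup_cons.mp this).1
    have hcyc : w.IsCycle := by
      refine ⟨⟨⟨?_⟩, ?_⟩, ?_⟩
      · rw [hwedges]
        rw [List.nodup_append]
        refine ⟨hpath.isTrail.edges_nodup, by simp [he3], ?_⟩
        intro x hx y hy hxy
        subst hxy
        simp only [List.mem_cons, List.mem_singleton, List.not_mem_nil] at hy
        rcases hy with rfl | rfl | h
        · exact he1 hx
        · exact he2 hx
        · exact h
      · intro h
        rw [h] at hwlen; simp at hwlen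
      · have : w.support.tail = p.support.tail ++ [α, c] := by
          rw [hwsupp, p.support_eq_cons]; rfl
        rw [this, List.nodup_append]
        refine ⟨(List.nodup_cons.mp (p.support_eq_cons ▸ hpath.support_nodup)).2, by simp [hαc'], ?_⟩
        intro x hx y hy hxy
        subst hxy
        simp only [List.mem_cons, List.mem_singleton, List.not_mem_nil] at hy
        rcases hy with rfl | rfl | h
        · exact hαsup (List.mem_of_mem_tail hx)
        · exact hcnt hx
        · exact h
    obtain ⟨u, v, hu, hv, huv, hne⟩ := hch w hcyc (by omega)
    rw [hwsupp, List.mem_append] at hu hv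
    rw [hwedges, List.mem_append] at hne
    push_neg at hne
    obtain ⟨hne1, hne23⟩ := hne
    have hne2 : s(u, v) ≠ s(e, α) := fun h => hne23 (by rw [h]; simp)
    have hne3 : s(u, v) ≠ s(α, c) := fun h => hne23 (by rw [h]; simp)
    have memcase : ∀ x : V, x ∈ [α, c] → x ∈ p.support ∨ x = α := by
      intro x hx
      rcases List.mem_cons.mp hx with rfl | hx
      · exact Or.inr rfl
      · simp only [List.mem_singleton] at hx
        exact Or.inl (hx ▸ p.start_mem_support)
    have hu' : u ∈ p.support ∨ u = α := hu.elim Or.inl (memcase u)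
    have hv' : v ∈ p.support ∨ v = α := hv.elim Or.inl (memcase v)
    have main : ∀ v' ∈ p.support, G.Adj α v' → s(α, v') ≠ s(e, α) → s(α, v') ≠ s(α, c) →
        G.Adj α (p.getVert 1) := by
      intro v' hv' hadj hn2 hn3
      have hvc : v' ≠ c := by
        intro h; exact hn3 (by rw [h])
      have hve : v' ≠ e := by
        intro h; subst h; exact hn2 Sym2.eq_swap
      have hsplit : (p.takeUntil v' hv').append (p.dropUntil v' hv') = p := take_spec p hv'
      have hl : (p.takeUntil v' hv').length + (p.dropUntil v' hv').length = n := by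
        rw [← hlen, ← length_append, hsplit]
      have hd1 : 1 ≤ (p.dropUntil v' hv').length := by
        by_contra h
        exact hve (eq_of_length_eq_zero (p := p.dropUntil v' hv') (by omega))
      have hl1 : 1 ≤ (p.takeUntil v' hv').length := by
        by_contra h
        exact hvc (eq_of_length_eq_zero (p := p.takeUntil v' hv') (by omega)).symm
      have hmin1 : ∀ q : G.Walk c v', (∀ x ∈ q.support, x ∉ Bs) →
          (p.takeUntil v' hv').length ≤ q.length := by
        intro q hq
        have := hmin (q.append (p.dropUntil v' hv')) ?_
        · rw [length_append] at this; omega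
        · intro x hx
          rcases (mem_support_append_iff _ _).mp hx with h | h
          · exact hq x h
          · exact hav x (support_dropUntil_subset p hv' h)
      have hltn : (p.takeUntil v' hv').length < n := by omega
      have hIH := ih (p.takeUntil v' hv').length hltn c v' α (p.takeUntil v' hv') rfl hl1
        (hpath.takeUntil hv') (fun x hx => hav x (support_takeUntil_subset p hv' hx))
        hαB hαc hadj.symm hmin1
      have hgv1 : p.getVert 1 = (p.takeUntil v' hv').getVert 1 := by
        conv_lhs => rw [← hsplit]
        exact getVert_one_append' _ _ hl1
      rw [hgv1]; exact hIH
    rcases hu' with hu' | rfl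
    · rcases hv' with hv' | rfl
      · exact absurd (no_chord' p (fun q hq => hlen ▸ hmin q hq) hav hu' hv' huv) hne1
      · refine main u hu' huv.symm ?_ ?_
        · rw [Sym2.eq_swap]; exact hne2
        · rw [Sym2.eq_swap]; exact hne3
    · rcases hv' with hv' | rfl
      · exact main v hv' huv hne2 hne3
      · exact absurd rfl huv.ne

end Walk
end SimpleGraph

end Helpers

namespace CoxeterMatrix

/-- Inclusion homomorphism between induced Coxeter diagrams. -/
def cDiagramMono {B : Type*} (M : CoxeterMatrix B) {A A' : Set B} (h : A ⊆ A') :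
    M.cDiagramOn A →g M.cDiagramOn A' where
  toFun x := ⟨x.1, h x.2⟩
  map_rel' := fun hadj => hadj

lemma max_ext {B : Type*} (M : CoxeterMatrix B) {a b c x : B}
    (hA : M.IsMaxIrredSimplex {a, b, c}) (hx : x ∉ ({a, b, c} : Set B))
    (hxa : M x a ≠ 0) (hxb : M x b ≠ 0) (hxc : M x c ≠ 0) :
    x ∈ M.perp {a, b, c} := by
  by_contra hperp
  have hperp' : ∃ t ∈ ({a, b, c} : Set B), M x t ≠ 2 := by
    by_contra h
    push_neg at h
    exact hperp h
  obtain ⟨t, ht, ht2⟩ := hperp'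
  refine hA.2 (insert x {a, b, c}) (Set.ssubset_insert hx) ⟨?_, ?_⟩
  · show (insert x ({a, b, c} : Set B)).Pairwise fun s t => M s t ≠ 0
    haveI : Std.Symm (fun s t : B => M s t ≠ 0) := ⟨fun s t h => by rw [M.symmetric]; exact h⟩
    rw [Set.pairwise_insert_of_symm]
    refine ⟨hA.1.1, ?_⟩
    intro y hy _
    simp only [Set.mem_insert_iff, Set.mem_singleton_iff] at hy
    rcases hy with rfl | rfl | rfl
    · exact hxa
    · exact hxb
    · exact hxc
  · show (M.cDiagramOn (insert x {a, b, c})).Connected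
    have hxt : x ≠ t := fun h => hx (h ▸ ht)
    have key : ∀ u : ↥(insert x ({a, b, c} : Set B)),
        (M.cDiagramOn (insert x {a, b, c})).Reachable u ⟨t, Set.mem_insert_of_mem _ ht⟩ := by
      rintro ⟨z, hz⟩
      rcases Set.mem_insert_iff.mp hz with rfl | hz'
      · exact SimpleGraph.Adj.reachable ⟨hxt, ht2⟩
      · exact SimpleGraph.Reachable.map (M.cDiagramMono (Set.subset_insert _ _))
          ((hA.1.2).preconnected ⟨z, hz'⟩ ⟨t, ht⟩)
    exact (SimpleGraph.connected_iff _).mpr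
      ⟨fun u v => (key u).trans (key v).symm, ⟨⟨t, Set.mem_insert_of_mem _ ht⟩⟩⟩

end CoxeterMatrix

/-- **Lemma 4.1.** Let `(W,S)` be a chordal Coxeter system, let `A = {a,b,c}` be a
maximal irreducible simplex, and let `d ∈ S − (A ∪ A^⊥)` be such that `{a,b,d}` is a
simplex. Then `{a,b} ∪ A^⊥` is a `(c,d)`-separator of the presentation diagram. -/
theorem perp_isSeparator {B : Type*} (M : CoxeterMatrix B)
    (hch : M.pDiagram.IsChordal) (a b c : B)
    (hab : a ≠ b) (hac : a ≠ c) (hbc : b ≠ c)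
    (hA : M.IsMaxIrredSimplex {a, b, c}) (d : B)
    (hd : d ∉ ({a, b, c} : Set B) ∪ M.perp {a, b, c})
    (habd : M.IsSimplex {a, b, d}) :
    M.pDiagram.IsSeparator c d ({a, b} ∪ M.perp {a, b, c}) := by
  classical
  set G := M.pDiagram with hG
  set Bs : Set B := {a, b} ∪ M.perp {a, b, c} with hBs
  have ha3 : a ∈ ({a, b, c} : Set B) := by simp
  have hb3 : b ∈ ({a, b, c} : Set B) := by simp
  have hc3 : c ∈ ({a, b, c} : Set B) := by simp
  have habcS : M.IsSimplex {a, b, c} := hA.1.1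
  have hMac : M a c ≠ 0 := habcS ha3 hc3 hac
  have hMbc : M b c ≠ 0 := habcS hb3 hc3 hbc
  have hdabc : d ∉ ({a, b, c} : Set B) := fun h => hd (Set.mem_union_left _ h)
  have hdperp : d ∉ M.perp {a, b, c} := fun h => hd (Set.mem_union_right _ h)
  have had : a ≠ d := fun h => hdabc (by rw [← h]; exact ha3)
  have hbd : b ≠ d := fun h => hdabc (by rw [← h]; exact hb3)
  have hcd : c ≠ d := fun h => hdabc (by rw [← h]; exact hc3)
  have hMad : M a d ≠ 0 := habd (by simp) (by simp) had
  have hMbd : M b d ≠ 0 := habd (by simp) (by simp) hbd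
  have haBs : a ∈ Bs := Set.mem_union_left _ (by simp)
  have hbBs : b ∈ Bs := Set.mem_union_left _ (by simp)
  have hperpBs : M.perp {a, b, c} ⊆ Bs := Set.subset_union_right
  have hcBs : c ∉ Bs := by
    intro h
    rcases h with h | h
    · rcases h with h | h
      · exact hac h.symm
      · exact hbc h.symm
    · have := h c hc3
      rw [M.diagonal c] at this
      omega
  have hdBs : d ∉ Bs := by
    intro h
    rcases h with h | h
    · rcases h with h | h
      · exact had h.symm
      · exact hbd h.symm
    · exact hdperp h
  refine ⟨hcBs, hdBs, ?_⟩
  intro hreach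
  -- extract a walk in `G` from `c` to `d` avoiding `Bs`
  have hwalk : ∃ q : G.Walk c d, ∀ v ∈ q.support, v ∉ Bs := by
    obtain ⟨w⟩ := hreach
    refine ⟨w.map (SimpleGraph.Embedding.induce Bsᶜ).toHom, ?_⟩
    intro v hv
    have hv : v ∈ (w.map (SimpleGraph.Embedding.induce Bsᶜ).toHom).support := hv
    rw [SimpleGraph.Walk.support_map, List.mem_map] at hv
    obtain ⟨x, _, rfl⟩ := hv
    exact x.2
  obtain ⟨q0, hq0⟩ := hwalk
  have hP : ∃ n, ∃ q : G.Walk c d, q.length = n ∧ ∀ v ∈ q.support, v ∉ Bs :=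
    ⟨q0.length, q0, rfl, hq0⟩
  obtain ⟨q1, hq1len, hq1av⟩ := Nat.find_spec hP
  set p := q1.bypass with hp
  have hpath : p.IsPath := q1.bypass_isPath
  have hpav : ∀ v ∈ p.support, v ∉ Bs := fun v hv => hq1av v (q1.support_bypass_subset hv)
  have hplen : p.length = Nat.find hP :=
    le_antisymm (hq1len ▸ q1.length_bypass_le) (Nat.find_min' hP ⟨p, rfl, hpav⟩)
  have hmin : ∀ q : G.Walk c d, (∀ v ∈ q.support, v ∉ Bs) → p.length ≤ q.length := by
    intro q hq
    rw [hplen]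
    exact Nat.find_min' hP ⟨q, rfl, hq⟩
  have h1 : 1 ≤ p.length := by
    rcases Nat.eq_zero_or_pos p.length with h | h
    · exact absurd (SimpleGraph.Walk.eq_of_length_eq_zero h) hcd
    · omega
  have hadj_ac : G.Adj a c := ⟨hac, hMac⟩
  have hadj_bc : G.Adj b c := ⟨hbc, hMbc⟩
  have hadj_da : G.Adj d a := ⟨had.symm, by rw [M.symmetric]; exact hMad⟩
  have hadj_db : G.Adj d b := ⟨hbd.symm, by rw [M.symmetric]; exact hMbd⟩
  have hax : G.Adj a (p.getVert 1) :=
    SimpleGraph.Walk.chordal_key' hch Bs p.length c d a p rfl h1 hpath hpav haBs hadj_ac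
      hadj_da hmin
  have hbx : G.Adj b (p.getVert 1) :=
    SimpleGraph.Walk.chordal_key' hch Bs p.length c d b p rfl h1 hpath hpav hbBs hadj_bc
      hadj_db hmin
  set x := p.getVert 1 with hx
  have hcx : G.Adj c x := by
    have := p.adj_getVert_succ (i := 0) (by omega)
    rwa [SimpleGraph.Walk.getVert_zero] at this
  have hxsup : x ∈ p.support :=
    SimpleGraph.Walk.mem_support_iff_exists_getVert.mpr ⟨1, rfl, h1⟩
  have hxBs : x ∉ Bs := hpav x hxsup
  have hxabc : x ∉ ({a, b, c} : Set B) := by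
    intro h
    simp only [Set.mem_insert_iff, Set.mem_singleton_iff] at h
    rcases h with h | h | h
    · exact hxBs (h.symm ▸ haBs)
    · exact hxBs (h.symm ▸ hbBs)
    · exact hcx.ne h.symm
  have hperp := M.max_ext hA hxabc (by rw [M.symmetric]; exact hax.2)
    (by rw [M.symmetric]; exact hbx.2) (by rw [M.symmetric]; exact hcx.2)
  exact hxBs (hperpBs hperp)
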